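/- Every 2-edge-colored finite graph G has a majority partition with 4 sets, i.e., a 4-partition (V1, V2, V3, V4) of V such that for each color c ∈ {1,2}, each i, and every v ∈ Vi, the number of edges of color c from v to vertices in Vi is at most the number of edges of color c from v to vertices outside Vi. -/

import Mathlib

open Finset

private lemma fin2_flip : ∀ a b : Fin 2, (a + 1 = b ↔ ¬ b = a) := by decide

private lemma twocut {V : Type*} [Fintype V] (G : SimpleGraph V)
    (col : V → V → Fin 2) (hsym : ∀ u v : V, col u v = col v u) (c : Fin 2) :
    ∃ q : V → Fin 2, ∀ v,
      {u : V | G.Adj v u ∧ col v u = c ∧ q u = q v}.ncard ≤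
      {u : V | G.Adj v u ∧ col v u = c ∧ q u ≠ q v}.ncard := by
  classical
  set s : (V → Fin 2) → Finset (V × V) :=
    fun r => univ.filter fun e => G.Adj e.1 e.2 ∧ col e.1 e.2 = c ∧ r e.1 = r e.2 with hs
  obtain ⟨q, -, hq⟩ := Finset.exists_min_image (univ : Finset (V → Fin 2))
    (fun r => (s r).card) ⟨fun _ => 0, mem_univ _⟩
  refine ⟨q, fun v => ?_⟩
  have key : (univ.filter fun u => G.Adj v u ∧ col v u = c ∧ q u = q v).card ≤
      (univ.filter fun u => G.Adj v u ∧ col v u = c ∧ q u ≠ q v).card := by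
    by_contra hlt
    push_neg at hlt
    set q' : V → Fin 2 := Function.update q v (q v + 1) with hq'
    have hq'v : q' v = q v + 1 := Function.update_self _ _ _
    have hq'ne : ∀ u, u ≠ v → q' u = q u := fun u hu => Function.update_of_ne hu _ _
    have decomp : ∀ r : V → Fin 2,
        (s r).card = ((s r).filter fun e => e.1 = v).card +
          ((s r).filter fun e => ¬ e.1 = v ∧ e.2 = v).card +
          ((s r).filter fun e => ¬ e.1 = v ∧ ¬ e.2 = v).card := by
      intro r
      have h2 := Finset.card_filter_add_card_filter_not
        (s := s r) (p := fun e => e.1 = v)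
      have h1 := Finset.card_filter_add_card_filter_not
        (s := (s r).filter fun e => ¬ e.1 = v) (p := fun e => e.2 = v)
      have ea : ((s r).filter fun e => ¬ e.1 = v).filter (fun e => e.2 = v) =
          (s r).filter fun e => ¬ e.1 = v ∧ e.2 = v := by
        ext e; simp only [mem_filter]; tauto
      have eb : ((s r).filter fun e => ¬ e.1 = v).filter (fun e => ¬ e.2 = v) =
          (s r).filter fun e => ¬ e.1 = v ∧ ¬ e.2 = v := by
        ext e; simp only [mem_filter]; tauto
      rw [ea, eb] at h1
      omega
    have first : ∀ r : V → Fin 2,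
        ((s r).filter fun e => e.1 = v).card =
        (univ.filter fun u => G.Adj v u ∧ col v u = c ∧ r v = r u).card := by
      intro r
      apply Finset.card_nbij' (fun e => e.2) (fun u => (v, u))
      · rintro ⟨a1, a2⟩ ha
        simp only [hs, mem_coe, mem_filter, mem_univ, true_and] at ha ⊢
        obtain ⟨⟨hadj, hc, hr⟩, h1⟩ := ha
        subst h1; exact ⟨hadj, hc, hr⟩
      · intro u hu
        simp only [hs, mem_coe, mem_filter, mem_univ, true_and] at hu ⊢
        exact ⟨hu, trivial⟩
      · rintro ⟨a1, a2⟩ ha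
        simp only [hs, mem_coe, mem_filter, mem_univ, true_and] at ha
        obtain ⟨-, h1⟩ := ha
        subst h1; rfl
      · intro u hu; rfl
    have second : ∀ r : V → Fin 2,
        ((s r).filter fun e => ¬ e.1 = v ∧ e.2 = v).card =
        (univ.filter fun u => G.Adj v u ∧ col v u = c ∧ r v = r u).card := by
      intro r
      apply Finset.card_nbij' (fun e => e.1) (fun u => (u, v))
      · rintro ⟨a1, a2⟩ ha
        simp only [hs, mem_coe, mem_filter, mem_univ, true_and] at ha ⊢
        obtain ⟨⟨hadj, hc, hr⟩, -, h2⟩ := ha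
        rw [h2] at hadj hc hr
        refine ⟨hadj.symm, ?_, hr.symm⟩
        rw [hsym v a1]; exact hc
      · intro u hu
        simp only [hs, mem_coe, mem_filter, mem_univ, true_and] at hu ⊢
        obtain ⟨hadj, hc, hr⟩ := hu
        refine ⟨⟨hadj.symm, ?_, hr.symm⟩, hadj.ne', trivial⟩
        rw [hsym u v]; exact hc
      · rintro ⟨a1, a2⟩ ha
        simp only [hs, mem_coe, mem_filter, mem_univ, true_and] at ha
        obtain ⟨-, -, h2⟩ := ha
        subst h2; rfl
      · intro u hu; rfl
    have third : ((s q').filter fun e => ¬ e.1 = v ∧ ¬ e.2 = v) =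
        ((s q).filter fun e => ¬ e.1 = v ∧ ¬ e.2 = v) := by
      ext e
      simp only [hs, mem_filter, mem_univ, true_and]
      constructor
      · rintro ⟨⟨hadj, hc, hr⟩, h1, h2⟩
        rw [hq'ne _ h1, hq'ne _ h2] at hr
        exact ⟨⟨hadj, hc, hr⟩, h1, h2⟩
      · rintro ⟨⟨hadj, hc, hr⟩, h1, h2⟩
        rw [← hq'ne _ h1, ← hq'ne _ h2] at hr
        exact ⟨⟨hadj, hc, hr⟩, h1, h2⟩
    have flipcount : (univ.filter fun u => G.Adj v u ∧ col v u = c ∧ q' v = q' u) =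
        (univ.filter fun u => G.Adj v u ∧ col v u = c ∧ q u ≠ q v) := by
      ext u
      simp only [mem_filter, mem_univ, true_and]
      constructor
      · rintro ⟨hadj, hc, hr⟩
        rw [hq'v, hq'ne _ hadj.ne'] at hr
        exact ⟨hadj, hc, (fin2_flip (q v) (q u)).mp hr⟩
      · rintro ⟨hadj, hc, hr⟩
        refine ⟨hadj, hc, ?_⟩
        rw [hq'v, hq'ne _ hadj.ne']
        exact (fin2_flip (q v) (q u)).mpr hr
    have samecount : (univ.filter fun u => G.Adj v u ∧ col v u = c ∧ q v = q u) =
        (univ.filter fun u => G.Adj v u ∧ col v u = c ∧ q u = q v) := by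
      ext u
      simp only [mem_filter, mem_univ, true_and]
      constructor
      · rintro ⟨hadj, hc, hr⟩; exact ⟨hadj, hc, hr.symm⟩
      · rintro ⟨hadj, hc, hr⟩; exact ⟨hadj, hc, hr.symm⟩
    have hFq := decomp q
    have hFq' := decomp q'
    rw [first q, second q, samecount] at hFq
    rw [first q', second q', flipcount, third] at hFq'
    have hmin := hq q' (mem_univ _)
    omega
  have e1 : {u : V | G.Adj v u ∧ col v u = c ∧ q u = q v}.ncard =
      (univ.filter fun u => G.Adj v u ∧ col v u = c ∧ q u = q v).card := by
    rw [← Set.ncard_coe_finset]; congr 1; ext u; simp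
  have e2 : {u : V | G.Adj v u ∧ col v u = c ∧ q u ≠ q v}.ncard =
      (univ.filter fun u => G.Adj v u ∧ col v u = c ∧ q u ≠ q v).card := by
    rw [← Set.ncard_coe_finset]; congr 1; ext u; simp
  rw [e1, e2]
  exact key

/-- Every 2-edge-colored finite graph has a majority partition with 4 sets. -/
theorem stmt_5 {V : Type*} [Fintype V] (G : SimpleGraph V)
    (col : V → V → Fin 2) (hsym : ∀ u v : V, col u v = col v u) :
    ∃ p : V → Fin 4, ∀ (c : Fin 2) (v : V),
      {u : V | G.Adj v u ∧ col v u = c ∧ p u = p v}.ncard ≤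
        {u : V | G.Adj v u ∧ col v u = c ∧ p u ≠ p v}.ncard := by
  classical
  obtain ⟨q0, hq0⟩ := twocut G col hsym 0
  obtain ⟨q1, hq1⟩ := twocut G col hsym 1
  refine ⟨fun v => finProdFinEquiv (q0 v, q1 v), fun c v => ?_⟩
  set p : V → Fin 4 := fun v => finProdFinEquiv (q0 v, q1 v) with hp
  have hpimp : ∀ u w, p u = p w → q0 u = q0 w ∧ q1 u = q1 w := by
    intro u w h
    have := finProdFinEquiv.injective h
    exact ⟨congrArg Prod.fst this, congrArg Prod.snd this⟩
  obtain ⟨qc, hqc1, hqc2⟩ : ∃ qc : V → Fin 2,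
      (∀ v, {u : V | G.Adj v u ∧ col v u = c ∧ qc u = qc v}.ncard ≤
        {u : V | G.Adj v u ∧ col v u = c ∧ qc u ≠ qc v}.ncard) ∧
      (∀ u w, p u = p w → qc u = qc w) := by
    fin_cases c
    · exact ⟨q0, hq0, fun u w h => (hpimp u w h).1⟩
    · exact ⟨q1, hq1, fun u w h => (hpimp u w h).2⟩
  calc {u : V | G.Adj v u ∧ col v u = c ∧ p u = p v}.ncard
      ≤ {u : V | G.Adj v u ∧ col v u = c ∧ qc u = qc v}.ncard := by
        apply Set.ncard_le_ncard _ (Set.toFinite _)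
        rintro u ⟨hadj, hc, h⟩
        exact ⟨hadj, hc, hqc2 _ _ h⟩
    _ ≤ {u : V | G.Adj v u ∧ col v u = c ∧ qc u ≠ qc v}.ncard := hqc1 v
    _ ≤ {u : V | G.Adj v u ∧ col v u = c ∧ p u ≠ p v}.ncard := by
        apply Set.ncard_le_ncard _ (Set.toFinite _)
        rintro u ⟨hadj, hc, h⟩
        exact ⟨hadj, hc, fun hh => h (hqc2 _ _ hh)⟩
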